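/- With H_a(X) = a·e^{(1-a²)X} + e^{(1-a^{-2})X} - 1 - a for a > 1 and X_a its unique positive zero: lim_{a→1⁺} X_a = 3/2. -/

import Mathlib

open Real Filter Set

noncomputable def Hf (a t : ℝ) : ℝ :=
  a * Real.exp ((1 - a ^ 2) * t) + Real.exp ((1 - (a ^ 2)⁻¹) * t) - 1 - a

lemma Hf_zero (a : ℝ) : Hf a 0 = 0 := by simp [Hf]

lemma convexOn_exp_mul (c : ℝ) : ConvexOn ℝ Set.univ fun t : ℝ => Real.exp (c * t) := by
  have h := convexOn_exp.comp_affineMap (AffineMap.lineMap (0 : ℝ) c)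
  have he : (Real.exp ∘ ⇑(AffineMap.lineMap (0 : ℝ) c)) = fun t : ℝ => Real.exp (c * t) := by
    funext x; simp [AffineMap.lineMap_apply, mul_comm]
  rw [he] at h
  simpa using h

lemma Hf_convex {a : ℝ} (ha : 0 ≤ a) : ConvexOn ℝ Set.univ (Hf a) := by
  have h := (((convexOn_exp_mul (1 - a ^ 2)).smul ha).add
      (convexOn_exp_mul (1 - (a ^ 2)⁻¹))).add (convexOn_const (-1 - a) convex_univ)
  suffices hfun : Hf a = (((fun x => a • rexp ((1 - a ^ 2) * x)) + fun t => rexp ((1 - (a ^ 2)⁻¹) * t)) + fun x => -1 - a) by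
    rw [hfun]; exact h
  funext x
  simp only [Hf, smul_eq_mul, Pi.add_apply]
  ring

lemma Hf_nonpos_of_mem {a x t : ℝ} (ha : 0 ≤ a) (hx : 0 < x) (hHx : Hf a x = 0)
    (ht0 : 0 ≤ t) (htx : t ≤ x) : Hf a t ≤ 0 := by
  have hc := Hf_convex ha
  have hs0 : 0 ≤ t / x := div_nonneg ht0 hx.le
  have hs1 : t / x ≤ 1 := (div_le_one hx).2 htx
  have h := hc.2 (mem_univ (0 : ℝ)) (mem_univ x) (by linarith : (0:ℝ) ≤ 1 - t / x) hs0
    (by ring)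
  have hx' : (1 - t / x) • (0 : ℝ) + (t / x) • x = t := by
    simp only [smul_eq_mul]
    field_simp
    ring
  rw [hx'] at h
  rw [Hf_zero, hHx] at h
  simpa using h

lemma Hf_nonneg_of_le {a x t : ℝ} (ha : 0 ≤ a) (hx : 0 < x) (hHx : Hf a x = 0)
    (hxt : x ≤ t) : 0 ≤ Hf a t := by
  have ht : 0 < t := lt_of_lt_of_le hx hxt
  have hc := Hf_convex ha
  have hs0 : 0 ≤ x / t := div_nonneg hx.le ht.le
  have hs1 : x / t ≤ 1 := (div_le_one ht).2 hxt
  have h := hc.2 (mem_univ (0 : ℝ)) (mem_univ t) (by linarith : (0:ℝ) ≤ 1 - x / t) hs0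
    (by ring)
  have hx' : (1 - x / t) • (0 : ℝ) + (x / t) • t = x := by
    simp only [smul_eq_mul]
    field_simp
    ring
  rw [hx', hHx, Hf_zero] at h
  simp only [smul_eq_mul, mul_zero, zero_add] at h
  have hxts : 0 < x / t := div_pos hx ht
  nlinarith

/-- The key limit: `H_a(t)/(a-1)² → 4t² - 6t` as `a → 1⁺`. -/
lemma key (t : ℝ) (ht : 0 < t) :
    Tendsto (fun a : ℝ => Hf a t / (a - 1) ^ 2) (nhdsWithin 1 (Set.Ioi 1))
      (nhds (4 * t ^ 2 - 6 * t)) := by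
  classical
  set F : ℝ → ℝ := fun a =>
    -t * ((a + 1) * (a ^ 2 + a + 1)) / a ^ 2 + t ^ 2 * (a + 1) ^ 2 * (a + 1 / a ^ 4) / 2
    with hFdef
  have hFc : ContinuousAt F 1 := by
    have h1 : (1:ℝ) ^ 2 ≠ 0 := by norm_num
    have h2 : (1:ℝ) ^ 4 ≠ 0 := by norm_num
    fun_prop (disch := norm_num)
  have hF1 : F 1 = 4 * t ^ 2 - 6 * t := by
    simp only [hFdef]
    norm_num
    ring
  have hFt : Tendsto F (nhdsWithin 1 (Set.Ioi 1)) (nhds (4 * t ^ 2 - 6 * t)) := by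
    rw [← hF1]
    exact hFc.continuousWithinAt.tendsto
  set R : ℝ → ℝ → ℝ := fun x _ => Real.exp x - (1 + x + x ^ 2 / 2) with hRdef
  have hident : ∀ a : ℝ, a ≠ 0 →
      Hf a t = (a - 1) ^ 2 * F a + a * R ((1 - a ^ 2) * t) 0 + R ((1 - (a ^ 2)⁻¹) * t) 0 := by
    intro a ha
    simp only [Hf, hRdef, hFdef]
    field_simp
    ring
  have hRbound : ∀ x : ℝ, |x| ≤ 1 → |R x 0| ≤ |x| ^ 3 * (2 / 9) := by
    intro x hx
    have h := Real.exp_bound hx (n := 3) (by norm_num)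
    have hsum : ∑ m ∈ Finset.range 3, x ^ m / m.factorial = 1 + x + x ^ 2 / 2 := by
      norm_num [Finset.sum_range_succ]
    rw [hsum] at h
    calc |R x 0| = |Real.exp x - (1 + x + x ^ 2 / 2)| := rfl
      _ ≤ |x| ^ 3 * ((3 : ℕ).succ / ((3:ℕ).factorial * 3)) := h
      _ = |x| ^ 3 * (2 / 9) := by norm_num [Nat.factorial]
  have hE : Tendsto (fun a : ℝ => Hf a t / (a - 1) ^ 2 - F a)
      (nhdsWithin 1 (Set.Ioi 1)) (nhds 0) := by
    apply squeeze_zero_norm' (a := fun a : ℝ => 2 / 9 * (a + 1) ^ 4 * t ^ 3 * (a - 1))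
    · have hcont : Tendsto (fun a : ℝ => (a ^ 2 - 1) * t) (nhds 1) (nhds 0) := by
        have : ContinuousAt (fun a : ℝ => (a ^ 2 - 1) * t) 1 := by fun_prop
        simpa using this.tendsto
      have h1 : ∀ᶠ a : ℝ in nhdsWithin 1 (Set.Ioi 1), (a ^ 2 - 1) * t < 1 :=
        (hcont.eventually_lt_const (by norm_num : (0:ℝ) < 1)).filter_mono nhdsWithin_le_nhds
      filter_upwards [h1, self_mem_nhdsWithin] with a hle ha
      have ha1 : 1 < a := ha
      have ha0 : 0 < a := by linarith
      have hane : a ≠ 0 := ne_of_gt ha0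
      have ha2 : 1 < a ^ 2 := by nlinarith
      -- abs values of arguments
      have hx1 : |(1 - a ^ 2) * t| = (a ^ 2 - 1) * t := by
        rw [abs_of_nonpos (by nlinarith)]
        ring
      have hx2abs : |(1 - (a ^ 2)⁻¹) * t| = (1 - (a ^ 2)⁻¹) * t := by
        rw [abs_of_nonneg]
        apply mul_nonneg _ ht.le
        have : (a ^ 2)⁻¹ ≤ 1 := by
          rw [inv_le_one_iff₀]; right; linarith
        linarith
      have hx2le : (1 - (a ^ 2)⁻¹) * t ≤ (a ^ 2 - 1) * t := by
        apply mul_le_mul_of_nonneg_right _ ht.le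
        have h1 : (a ^ 2 - 1) / a ^ 2 ≤ a ^ 2 - 1 := by
          rw [div_le_iff₀ (by positivity)]
          nlinarith
        have : 1 - (a ^ 2)⁻¹ = (a ^ 2 - 1) / a ^ 2 := by field_simp
        linarith
      have hb1 : |(1 - a ^ 2) * t| ≤ 1 := by rw [hx1]; linarith
      have hb2 : |(1 - (a ^ 2)⁻¹) * t| ≤ 1 := by
        rw [hx2abs]; linarith
      have hR1 := hRbound _ hb1
      have hR2 := hRbound _ hb2
      -- rewrite the expression using the identity
      have hne : (a - 1) ^ 2 ≠ 0 := ne_of_gt (pow_pos (by linarith) 2)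
      have heq : Hf a t / (a - 1) ^ 2 - F a =
          (a * R ((1 - a ^ 2) * t) 0 + R ((1 - (a ^ 2)⁻¹) * t) 0) / (a - 1) ^ 2 := by
        rw [hident a hane]
        rw [add_assoc, add_div, mul_div_cancel_left₀ _ hne]
        ring
      rw [heq]
      rw [Real.norm_eq_abs, abs_div, abs_of_nonneg (by positivity : (0:ℝ) ≤ (a-1)^2)]
      rw [div_le_iff₀ (by positivity)]
      have hcube : |(1 - (a ^ 2)⁻¹) * t| ^ 3 ≤ |(1 - a ^ 2) * t| ^ 3 := by
        apply pow_le_pow_left₀ (abs_nonneg _) (by rw [hx1, hx2abs]; linarith)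
      have htri : |a * R ((1 - a ^ 2) * t) 0 + R ((1 - (a ^ 2)⁻¹) * t) 0| ≤
          a * |R ((1 - a ^ 2) * t) 0| + |R ((1 - (a ^ 2)⁻¹) * t) 0| := by
        calc _ ≤ |a * R ((1 - a ^ 2) * t) 0| + |R ((1 - (a ^ 2)⁻¹) * t) 0| := abs_add_le _ _
          _ = a * |R ((1 - a ^ 2) * t) 0| + |R ((1 - (a ^ 2)⁻¹) * t) 0| := by
              rw [abs_mul, abs_of_pos ha0]
      have hx1v : |(1 - a ^ 2) * t| = (a - 1) * ((a + 1) * t) := by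
        rw [hx1]; ring
      have hfin : a * |R ((1 - a ^ 2) * t) 0| + |R ((1 - (a ^ 2)⁻¹) * t) 0| ≤
          (a + 1) * (|(1 - a ^ 2) * t| ^ 3 * (2 / 9)) := by
        have hR2' : |R ((1 - (a ^ 2)⁻¹) * t) 0| ≤ |(1 - a ^ 2) * t| ^ 3 * (2 / 9) :=
          hR2.trans (by nlinarith [abs_nonneg ((1 - (a ^ 2)⁻¹) * t)])
        nlinarith [abs_nonneg (R ((1 - a ^ 2) * t) 0),
          pow_nonneg (abs_nonneg ((1 - a ^ 2) * t)) 3]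
      calc |a * R ((1 - a ^ 2) * t) 0 + R ((1 - (a ^ 2)⁻¹) * t) 0| ≤
            (a + 1) * (|(1 - a ^ 2) * t| ^ 3 * (2 / 9)) := htri.trans hfin
        _ = 2 / 9 * (a + 1) ^ 4 * t ^ 3 * (a - 1) * (a - 1) ^ 2 := by
            rw [hx1v]; ring
    · have hcont : ContinuousAt (fun a : ℝ => 2 / 9 * (a + 1) ^ 4 * t ^ 3 * (a - 1)) 1 := by
        fun_prop
      have := hcont.tendsto.mono_left (nhdsWithin_le_nhds
        (s := Set.Ioi (1:ℝ)))
      simpa using this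
  have h := hFt.add hE
  have heq : (fun a : ℝ => F a + (Hf a t / (a - 1) ^ 2 - F a)) =
      fun a : ℝ => Hf a t / (a - 1) ^ 2 := by
    funext a; ring
  rw [heq] at h
  simpa using h

theorem stmt_6 (X : ℝ → ℝ)
    (hX : ∀ a : ℝ, 1 < a → 0 < X a ∧
      a * Real.exp ((1 - a ^ 2) * X a) + Real.exp ((1 - (a ^ 2)⁻¹) * X a) - 1 - a = 0) :
    Filter.Tendsto X (nhdsWithin 1 (Set.Ioi 1)) (nhds (3 / 2)) := by
  rw [Metric.tendsto_nhds]
  intro ε hε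
  set δ : ℝ := min (ε / 2) (1 / 4) with hδdef
  have hδpos : 0 < δ := lt_min (by linarith) (by norm_num)
  have hδle : δ ≤ 1 / 4 := min_le_right _ _
  have hδε : δ < ε := lt_of_le_of_lt (min_le_left _ _) (by linarith)
  set t₁ : ℝ := 3 / 2 - δ with ht₁def
  set t₂ : ℝ := 3 / 2 + δ with ht₂def
  have ht₁pos : 0 < t₁ := by simp only [ht₁def]; linarith
  have ht₂pos : 0 < t₂ := by simp only [ht₂def]; linarith
  -- limits of quotients
  have hlim1 := key t₁ ht₁pos
  have hlim2 := key t₂ ht₂pos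
  have hv1 : 4 * t₁ ^ 2 - 6 * t₁ < 0 := by
    simp only [ht₁def]; nlinarith
  have hv2 : 0 < 4 * t₂ ^ 2 - 6 * t₂ := by
    simp only [ht₂def]; nlinarith
  have hneg : ∀ᶠ a : ℝ in nhdsWithin 1 (Set.Ioi 1), Hf a t₁ / (a - 1) ^ 2 < 0 :=
    hlim1.eventually_lt_const hv1
  have hpos : ∀ᶠ a : ℝ in nhdsWithin 1 (Set.Ioi 1), 0 < Hf a t₂ / (a - 1) ^ 2 :=
    hlim2.eventually_const_lt hv2
  filter_upwards [hneg, hpos, self_mem_nhdsWithin] with a hn hp ha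
  have ha1 : 1 < a := ha
  have ha0 : (0:ℝ) ≤ a := by linarith
  have hsq : 0 < (a - 1) ^ 2 := pow_pos (by linarith) 2
  obtain ⟨hXpos, hXzero⟩ := hX a ha1
  have hHXa : Hf a (X a) = 0 := hXzero
  have hsqne : (a - 1) ^ 2 ≠ 0 := ne_of_gt hsq
  have hH1 : Hf a t₁ < 0 := by
    have h := mul_neg_of_neg_of_pos hn hsq
    rwa [div_mul_cancel₀ _ hsqne] at h
  have hH2 : 0 < Hf a t₂ := by
    have h := mul_pos hp hsq
    rwa [div_mul_cancel₀ _ hsqne] at h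
  -- t₁ < X a
  have hlow : t₁ < X a := by
    by_contra hcon
    push_neg at hcon
    have := Hf_nonneg_of_le ha0 hXpos hHXa hcon
    linarith
  -- X a < t₂
  have hhigh : X a < t₂ := by
    by_contra hcon
    push_neg at hcon
    have := Hf_nonpos_of_mem ha0 hXpos hHXa ht₂pos.le hcon
    linarith
  rw [Real.dist_eq, abs_lt]
  constructor <;> [skip; skip] <;> simp only [ht₁def, ht₂def] at hlow hhigh <;> linarith
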